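/- Let A₁, A₂, A₃, A₄, A₅ be real constants with A₁ ≠ 0 and A₅ ≠ 0. Define functions of t by q₁(t) = (2/27)(A₂+A₃)t + A₄, p₁(t) = A₅ e^{(2/27)(A₂+A₃)t}, r₁(t) = p₁(t)/A₁, s₁(t) = (A₂/A₅) e^{−(2/27)(A₂+A₃)t}, w₁(t) = A₃/r₁(t). Then (q₁, p₁, r₁, s₁, w₁) solves the single-peakon dynamical system of the four-component equation with H = −(1/9)[(u₁−u_{1,x})(v₁+v_{1,x}) + (u₂−u_{2,x})(v₂+v_{2,x})]: q₁' = (2/27)(p₁s₁ + r₁w₁), p₁' = (2/27)p₁(p₁s₁ + r₁w₁), r₁' = (2/27)r₁(p₁s₁ + r₁w₁), s₁' = −(2/27)s₁(p₁s₁ + r₁w₁), w₁' = −(2/27)w₁(p₁s₁ + r₁w₁). -/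

import Mathlib

lemma deriv_aexp (a b t : ℝ) :
    deriv (fun t => a * Real.exp (b * t)) t = b * (a * Real.exp (b * t)) := by
  have h1 : HasDerivAt (fun x : ℝ => b * x) (b * 1) t := (hasDerivAt_id t).const_mul b
  have h3 := h1.exp.const_mul a
  rw [h3.deriv]; ring

/-- the explicit single-peakon functions solve the N = 1 peakon dynamical
system of the four-component equation of Example 2
(H = −(1/9)[(u₁−u₁ₓ)(v₁+v₁ₓ) + (u₂−u₂ₓ)(v₂+v₂ₓ)]). -/
theorem peakon_solution_example2 (A₁ A₂ A₃ A₄ A₅ : ℝ) (hA₁ : A₁ ≠ 0) (hA₅ : A₅ ≠ 0)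
    (q₁ p₁ r₁ s₁ w₁ : ℝ → ℝ)
    (hq : q₁ = fun t => (2 / 27) * (A₂ + A₃) * t + A₄)
    (hp : p₁ = fun t => A₅ * Real.exp ((2 / 27) * (A₂ + A₃) * t))
    (hr : r₁ = fun t => p₁ t / A₁)
    (hs : s₁ = fun t => (A₂ / A₅) * Real.exp (-(2 / 27) * (A₂ + A₃) * t))
    (hw : w₁ = fun t => A₃ / r₁ t) :
    ∀ t : ℝ,
      deriv q₁ t = (2 / 27) * (p₁ t * s₁ t + r₁ t * w₁ t) ∧
      deriv p₁ t = (2 / 27) * p₁ t * (p₁ t * s₁ t + r₁ t * w₁ t) ∧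
      deriv r₁ t = (2 / 27) * r₁ t * (p₁ t * s₁ t + r₁ t * w₁ t) ∧
      deriv s₁ t = -(2 / 27) * s₁ t * (p₁ t * s₁ t + r₁ t * w₁ t) ∧
      deriv w₁ t = -(2 / 27) * w₁ t * (p₁ t * s₁ t + r₁ t * w₁ t) := by
  have hexp : ∀ x : ℝ, Real.exp x ≠ 0 := fun x => (Real.exp_pos _).ne'
  set c : ℝ := (2 / 27) * (A₂ + A₃) with hc
  have hpf : p₁ = fun t => A₅ * Real.exp (c * t) := hp
  have hrf : r₁ = fun t => (A₅ / A₁) * Real.exp (c * t) := by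
    rw [hr, hpf]; funext t; ring
  have hsf : s₁ = fun t => (A₂ / A₅) * Real.exp ((-c) * t) := by
    rw [hs]; funext t; congr 2; rw [hc]; ring
  have hwf : w₁ = fun t => (A₃ * A₁ / A₅) * Real.exp ((-c) * t) := by
    rw [hw, hrf]; funext t
    rw [neg_mul, Real.exp_neg]
    field_simp
  have hqf : q₁ = fun t => c * t + A₄ := hq
  intro t
  have hval : p₁ t * s₁ t + r₁ t * w₁ t = A₂ + A₃ := by
    rw [hpf, hrf, hsf, hwf]
    simp only [neg_mul, Real.exp_neg]
    field_simp
  have hdq : deriv q₁ t = c := by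
    rw [hqf]
    have h : HasDerivAt (fun t : ℝ => c * t + A₄) (c * 1) t :=
      ((hasDerivAt_id t).const_mul c).add_const A₄
    rw [h.deriv]; ring
  refine ⟨?_, ?_, ?_, ?_, ?_⟩
  all_goals rw [hpf, hrf, hsf, hwf]
  · rw [hdq]
    simp only [neg_mul, Real.exp_neg]
    field_simp
    ring
  all_goals
    rw [deriv_aexp]
    simp only [neg_mul, Real.exp_neg]
    field_simp
    ring
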